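/- Let A_k (k = 1,...,K) be n×n real matrices and suppose a layered propagation is defined by H^{(t+1)} = ∑_k A_k H^{(t)} W_k^{(t)}, where each W_k^{(t)} is a d×d matrix with all entries bounded in absolute value by β. Then for any layers t and entries, the partial derivative of the (v,q)-entry of H^{(ℓ+1)} with respect to the (u,p)-entry of H^{(0)} is bounded in absolute value by (dβ)^{ℓ+1} times the (v,u)-entry of (∑_k |A_k|)^{ℓ+1}, where |A_k| denotes the entrywise absolute value. -/

import Mathlib

open Matrix BigOperators

theorem oversquashing_sensitivity_bound
    (n d K : ℕ) (A : Fin K → Matrix (Fin n) (Fin n) ℝ)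
    (Wmat : ℕ → Fin K → Matrix (Fin d) (Fin d) ℝ) (β : ℝ)
    (hβ : ∀ t k p q, |Wmat t k p q| ≤ β)
    (F : ℕ → Matrix (Fin n) (Fin d) ℝ → Matrix (Fin n) (Fin d) ℝ)
    (hF0 : ∀ X, F 0 X = X)
    (hFs : ∀ t X, F (t + 1) X = ∑ k, A k * F t X * Wmat t k)
    (ℓ : ℕ) (H0 : Matrix (Fin n) (Fin d) ℝ) (v u : Fin n) (q p : Fin d) (c : ℝ)
    (hderiv : HasDerivAt
      (fun t : ℝ => F (ℓ + 1) (H0 + t • Matrix.single u p 1) v q) c 0) :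
    |c| ≤ ((d : ℝ) * β) ^ (ℓ + 1) *
      ((∑ k, (A k).map (fun x => |x|)) ^ (ℓ + 1)) v u := by
  set E : Matrix (Fin n) (Fin d) ℝ := Matrix.single u p 1 with hE
  set B : Matrix (Fin n) (Fin n) ℝ := ∑ k, (A k).map (fun x => |x|) with hB
  -- linearity of F
  have lin : ∀ t (X Y : Matrix (Fin n) (Fin d) ℝ) (s : ℝ),
      F t (X + s • Y) = F t X + s • F t Y := by
    intro t
    induction t with
    | zero => intro X Y s; simp [hF0]
    | succ t ih =>
        intro X Y s
        rw [hFs, hFs, hFs, Finset.smul_sum, ← Finset.sum_add_distrib]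
        refine Finset.sum_congr rfl fun k _ => ?_
        rw [ih, Matrix.mul_add, Matrix.add_mul, Matrix.mul_smul, Matrix.smul_mul]
  -- identify c
  have hfun : (fun t : ℝ => F (ℓ + 1) (H0 + t • E) v q)
      = fun t : ℝ => (F (ℓ + 1) H0) v q + t * (F (ℓ + 1) E) v q := by
    funext t
    rw [lin (ℓ + 1) H0 E t]
    simp [Matrix.add_apply, Matrix.smul_apply, smul_eq_mul]
  have hd2 : HasDerivAt
      (fun t : ℝ => (F (ℓ + 1) H0) v q + t * (F (ℓ + 1) E) v q)
      ((F (ℓ + 1) E) v q) 0 := by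
    simpa using ((hasDerivAt_id (0 : ℝ)).mul_const ((F (ℓ + 1) E) v q)).const_add
      ((F (ℓ + 1) H0) v q)
  rw [hfun] at hderiv
  have hc : c = (F (ℓ + 1) E) v q := hderiv.unique hd2
  -- nonnegativity of entries of B^t
  have hBpow : ∀ (t : ℕ) (i j : Fin n), 0 ≤ (B ^ t) i j := by
    intro t
    induction t with
    | zero => intro i j; simp [Matrix.one_apply]; positivity
    | succ t ih =>
        intro i j
        rw [pow_succ, Matrix.mul_apply]
        apply Finset.sum_nonneg
        intro w _
        apply mul_nonneg (ih i w)
        simp only [hB, Matrix.sum_apply, Matrix.map_apply]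
        exact Finset.sum_nonneg fun k _ => abs_nonneg _
  -- key bound by induction
  have key : ∀ (t : ℕ) (v' : Fin n) (q' : Fin d),
      |F t E v' q'| ≤ ((d : ℝ) * β) ^ t * (B ^ t) v' u := by
    intro t
    induction t with
    | zero =>
        intro v' q'
        rw [hF0]
        simp only [pow_zero, one_mul, Matrix.one_apply, hE, Matrix.single,
          Matrix.of_apply]
        by_cases h : u = v' ∧ p = q'
        · obtain ⟨h1, h2⟩ := h
          subst h1; subst h2
          simp
        · rw [if_neg h]
          simp only [abs_zero]
          split <;> norm_num
    | succ t ih =>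
        intro v' q'
        have h1 : F (t + 1) E v' q'
            = ∑ k, ∑ r, ∑ w, A k v' w * F t E w r * Wmat t k r q' := by
          rw [hFs, Matrix.sum_apply]
          refine Finset.sum_congr rfl fun k _ => ?_
          rw [Matrix.mul_apply]
          refine Finset.sum_congr rfl fun r _ => ?_
          rw [Matrix.mul_apply, Finset.sum_mul]
        rw [h1]
        have hβ0 : ∀ k : Fin K, (0:ℝ) ≤ β := fun k => (abs_nonneg _).trans (hβ t k p q')
        calc |∑ k, ∑ r, ∑ w, A k v' w * F t E w r * Wmat t k r q'|
            ≤ ∑ k, ∑ r, ∑ w, |A k v' w * F t E w r * Wmat t k r q'| := by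
              refine le_trans (Finset.abs_sum_le_sum_abs _ _) ?_
              refine Finset.sum_le_sum fun k _ => ?_
              refine le_trans (Finset.abs_sum_le_sum_abs _ _) ?_
              exact Finset.sum_le_sum fun r _ => Finset.abs_sum_le_sum_abs _ _
          _ ≤ ∑ k, ∑ r, ∑ w, |A k v' w| * (((d : ℝ) * β) ^ t * (B ^ t) w u) * β := by
              refine Finset.sum_le_sum fun k _ => Finset.sum_le_sum fun r _ =>
                Finset.sum_le_sum fun w _ => ?_
              rw [abs_mul, abs_mul]
              have hW : |Wmat t k r q'| ≤ β := hβ t k r q'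
              have hmid : |F t E w r| ≤ ((d : ℝ) * β) ^ t * (B ^ t) w u := ih w r
              have h0 : (0:ℝ) ≤ ((d : ℝ) * β) ^ t * (B ^ t) w u :=
                (abs_nonneg _).trans hmid
              apply mul_le_mul
              · exact mul_le_mul_of_nonneg_left hmid (abs_nonneg _)
              · exact hW
              · exact abs_nonneg _
              · exact mul_nonneg (abs_nonneg _) h0
          _ = ∑ k, (d : ℝ) * ∑ w, |A k v' w| * (((d : ℝ) * β) ^ t * (B ^ t) w u) * β := by
              refine Finset.sum_congr rfl fun k _ => ?_
              rw [Finset.sum_const, Finset.card_univ, Fintype.card_fin, nsmul_eq_mul]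
          _ = ((d : ℝ) * β) ^ (t + 1) * ∑ w, (∑ k, |A k v' w|) * (B ^ t) w u := by
              simp only [Finset.mul_sum, Finset.sum_mul]
              rw [Finset.sum_comm]
              refine Finset.sum_congr rfl fun w _ => Finset.sum_congr rfl fun k _ => ?_
              ring
          _ = ((d : ℝ) * β) ^ (t + 1) * (B ^ (t + 1)) v' u := by
              congr 1
              rw [pow_succ', Matrix.mul_apply]
              refine Finset.sum_congr rfl fun w _ => ?_
              simp [hB, Matrix.sum_apply, Matrix.map_apply, Finset.sum_mul]
  rw [hc]
  exact key (ℓ + 1) v q
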